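/- Let i and j be integers with j ≥ 1 and j < i ≤ 2j, and define the rational number a_{ij} = 2^{j−i} · 6ij · ((2j)! / (2^j · j!))² · ((2^i · i!) / (2i)!)² · ((2i−1)! / (i+j)!) · ((2j+i−1)! / (3j)!) · C(j, i−j), where C(j, i−j) is the binomial coefficient. Then a_{ij}/j is a 2-adic integer; that is, v₂(a_{ij}) ≥ v₂(j), where v₂ denotes the 2-adic valuation on ℚ. (Consequently, for every r ∈ (5/12, 7/12), the lower-triangular factor A^{(r)} in the LDU factorisation of the U operator for p = 2 has entries in the ring of integers and is congruent to the identity modulo the maximal ideal.) -/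

import Mathlib

open Nat Finset

private def V2 (n : ℕ) : ℕ := padicValNat 2 n

private def VF (n : ℕ) : ℕ := padicValNat 2 (Nat.factorial n)

private def W2 (a b : ℕ) : ℕ := ∑ t ∈ Finset.Ico (a + 1) (b + 1), padicValNat 2 t

private lemma v2_odd (n : ℕ) : padicValNat 2 (2 * n + 1) = 0 :=
  padicValNat.eq_zero_of_not_dvd (by omega)

private lemma v2_two_mul (n : ℕ) (hn : n ≠ 0) :
    padicValNat 2 (2 * n) = padicValNat 2 n + 1 := by
  rw [padicValNat.mul (by norm_num) hn, padicValNat.self (by norm_num)]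
  omega

private lemma VF_succ (n : ℕ) : VF (n + 1) = VF n + padicValNat 2 (n + 1) := by
  unfold VF
  rw [Nat.factorial_succ, padicValNat.mul (Nat.succ_ne_zero n) (Nat.factorial_ne_zero n),
    add_comm]

private lemma W2_consec {a b c : ℕ} (hab : a ≤ b) (hbc : b ≤ c) :
    W2 a b + W2 b c = W2 a c := by
  unfold W2
  exact Finset.sum_Ico_consecutive _ (by omega) (by omega)

private lemma W2_succ_top {a b : ℕ} (hab : a ≤ b) :
    W2 a (b + 1) = W2 a b + padicValNat 2 (b + 1) := by
  unfold W2
  rw [Finset.sum_Ico_succ_top (by omega)]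

private lemma W2_self (a : ℕ) : W2 a a = 0 := by
  unfold W2; simp

private lemma VF_W2 {a b : ℕ} (hab : a ≤ b) : VF a + W2 a b = VF b := by
  induction b, hab using Nat.le_induction with
  | base => simp [W2_self]
  | succ n hn ih => rw [W2_succ_top hn, VF_succ, ← ih]; omega

private lemma W2_pair (c : ℕ) : ∀ m : ℕ, W2 (2 * c + 1) (2 * c + 1 + 2 * m) = m + W2 c (c + m) := by
  intro m
  induction m with
  | zero => simp [W2_self]
  | succ m ih =>
    have h1 : 2 * c + 1 + 2 * (m + 1) = (2 * c + 1 + 2 * m + 1) + 1 := by omega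
    rw [h1, W2_succ_top (by omega), W2_succ_top (by omega), ih]
    have h3 : 2 * c + 1 + 2 * m + 1 + 1 = 2 * (c + m + 1) + 1 := by omega
    have h2 : 2 * c + 1 + 2 * m + 1 = 2 * (c + m + 1) := by omega
    rw [h3, h2, v2_odd, v2_two_mul _ (by omega)]
    have h4 : c + (m + 1) = (c + m) + 1 := by omega
    rw [h4, W2_succ_top (by omega)]
    omega

private lemma W2_ge_half (a : ℕ) : ∀ m : ℕ, m ≤ W2 a (a + 2 * m) := by
  intro m
  induction m with
  | zero => simp
  | succ m ih =>
    have h1 : a + 2 * (m + 1) = (a + 2 * m + 1) + 1 := by omega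
    rw [h1, W2_succ_top (by omega), W2_succ_top (by omega)]
    rcases Nat.even_or_odd a with ⟨k, hk⟩ | ⟨k, hk⟩
    · have h2 : a + 2 * m + 1 + 1 = 2 * (k + m + 1) := by omega
      rw [h2, v2_two_mul _ (by omega)]
      omega
    · have h2 : a + 2 * m + 1 = 2 * (k + m + 1) := by omega
      rw [h2, v2_two_mul _ (by omega)]
      omega

private lemma W2_mono {a b c : ℕ} (hab : a ≤ b) (hbc : b ≤ c) : W2 a b ≤ W2 a c := by
  have := W2_consec hab hbc
  omega

private lemma W2_one (a : ℕ) : W2 a (a + 1) = padicValNat 2 (a + 1) := by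
  have := W2_succ_top (a := a) (b := a) le_rfl
  simpa [W2_self] using this

private lemma keyE4_even (j m : ℕ) (hm : 1 ≤ m) (hmj : m + m ≤ j) :
    m ≤ W2 (j + m) (j + (m + m)) + W2 (3 * j) (3 * j + (m + m) - 1) := by
  rcases Nat.lt_or_ge m 2 with h2 | h2
  · have hm1 : m = 1 := by omega
    subst hm1
    have e1 : W2 (j + 1) (j + (1 + 1)) = padicValNat 2 (j + 2) := by
      have := W2_one (j + 1)
      have h : j + 1 + 1 = j + (1 + 1) := by omega
      rwa [h] at this
    have e2 : W2 (3 * j) (3 * j + (1 + 1) - 1) = padicValNat 2 (3 * j + 1) := by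
      have := W2_one (3 * j)
      have h : 3 * j + 1 = 3 * j + (1 + 1) - 1 := by omega
      rwa [h] at this
    rcases Nat.even_or_odd j with ⟨k, hk⟩ | ⟨k, hk⟩
    · have h : j + 2 = 2 * (k + 1) := by omega
      rw [e1, h, v2_two_mul _ (by omega)]
      omega
    · have h : 3 * j + 1 = 2 * (3 * k + 2) := by omega
      rw [e2, h, v2_two_mul _ (by omega)]
      omega
  · have b1 : 1 ≤ W2 (j + m) (j + (m + m)) := by
      have h1 := W2_ge_half (j + m) 1
      have h2 := W2_mono (a := j + m) (b := j + m + 2 * 1) (c := j + (m + m)) (by omega) (by omega)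
      omega
    have b2 : m - 1 ≤ W2 (3 * j) (3 * j + (m + m) - 1) := by
      have h1 := W2_ge_half (3 * j) (m - 1)
      have h2 := W2_mono (a := 3 * j) (b := 3 * j + 2 * (m - 1)) (c := 3 * j + (m + m) - 1)
        (by omega) (by omega)
      omega
    omega

private lemma keyE4_odd (j m : ℕ) (hmj : 2 * m + 1 ≤ j) :
    m ≤ W2 (j + m) (j + (2 * m + 1)) + W2 (3 * j) (3 * j + (2 * m + 1) - 1) := by
  have h1 := W2_ge_half (3 * j) m
  have h2 := W2_mono (a := 3 * j) (b := 3 * j + 2 * m) (c := 3 * j + (2 * m + 1) - 1)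
    (by omega) (by omega)
  omega

/-- Main factorial valuation inequality: for `1 ≤ u ≤ j`,
`v₂((2j+u)!) + v₂((3j)!) ≤ j + v₂((j+u)!) + v₂((3j+u−1)!)`. -/
private lemma main_ineq (j u : ℕ) (hu : 1 ≤ u) (huj : u ≤ j) :
    VF (2 * j + u) + VF (3 * j) ≤ j + VF (j + u) + VF (3 * j + u - 1) := by
  have hV2j : VF (2 * j) = VF j + j := padicValNat_factorial_mul j
  have e1 : W2 j (2 * j + 1) = j := by
    have h1 := VF_W2 (a := j) (b := 2 * j + 1) (by omega)
    have h2 : VF (2 * j + 1) = VF (2 * j) + padicValNat 2 (2 * j + 1) := VF_succ (2 * j)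
    rw [v2_odd] at h2
    omega
  have f1 := VF_W2 (a := j + u) (b := 2 * j + u) (by omega)
  have f2 := VF_W2 (a := 3 * j) (b := 3 * j + u - 1) (by omega)
  have e2 : W2 (j + u) (2 * j + 1) + W2 (2 * j + 1) (2 * j + u) = W2 (j + u) (2 * j + u) :=
    W2_consec (by omega) (by omega)
  rcases Nat.even_or_odd u with ⟨m, hm⟩ | ⟨m, hm⟩
  · subst hm
    have hm1 : 1 ≤ m := by omega
    have p := W2_pair j m
    have e3 : W2 (2 * j + 1) (2 * j + (m + m)) = m + W2 j (j + m) := by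
      have hstep : W2 (2 * j + 1) (2 * j + 1 + 2 * m) =
          W2 (2 * j + 1) (2 * j + (m + m)) + padicValNat 2 (2 * (j + m) + 1) := by
        have h : 2 * j + 1 + 2 * m = (2 * j + (m + m)) + 1 := by omega
        rw [h, W2_succ_top (by omega)]
        have h' : 2 * j + (m + m) + 1 = 2 * (j + m) + 1 := by omega
        rw [h']
      rw [v2_odd] at hstep
      omega
    have e5 : W2 j (j + m) + W2 (j + m) (j + (m + m)) = W2 j (j + (m + m)) :=
      W2_consec (by omega) (by omega)
    have e6 : W2 j (j + (m + m)) + W2 (j + (m + m)) (2 * j + 1) = W2 j (2 * j + 1) :=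
      W2_consec (by omega) (by omega)
    have e4 := keyE4_even j m hm1 huj
    omega
  · subst hm
    have p := W2_pair j m
    have e3 : W2 (2 * j + 1) (2 * j + (2 * m + 1)) = m + W2 j (j + m) := by
      have h : 2 * j + (2 * m + 1) = 2 * j + 1 + 2 * m := by omega
      rw [h, p]
    have e5 : W2 j (j + m) + W2 (j + m) (j + (2 * m + 1)) = W2 j (j + (2 * m + 1)) :=
      W2_consec (by omega) (by omega)
    have e6 : W2 j (j + (2 * m + 1)) + W2 (j + (2 * m + 1)) (2 * j + 1) = W2 j (2 * j + 1) :=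
      W2_consec (by omega) (by omega)
    have e4 := keyE4_odd j m (by omega)
    omega

private lemma v2_self_q : padicValRat 2 (2 : ℚ) = 1 := by
  have := padicValRat.self (p := 2) (by norm_num)
  simpa using this


/-- **2-integrality of the entries of the lower triangular factor for `p = 2`.**
For integers `j ≥ 1` and `j < i ≤ 2j`, the Buzzard–Calegari formula
`a_{ij} = 2^{j−i} · 6ij · ((2j)!/(2^j j!))² · ((2^i i!)/(2i)!)² · ((2i−1)!/(i+j)!) ·
((2j+i−1)!/(3j)!) · C(j, i−j)` (the `(i,j)` entry of the lower-triangular factor `A^{(7/12)}`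
of the LDU factorisation of the 2-adic `U` operator) satisfies `v₂(a_{ij}) ≥ v₂(j)`, i.e.
`a_{ij}/j` is a 2-adic integer. -/
theorem lower_factor_entries_two_integral
    (i j : ℕ) (hj : 1 ≤ j) (hji : j < i) (hij : i ≤ 2 * j)
    (a : ℚ)
    (ha : a = (2 : ℚ) ^ ((j : ℤ) - (i : ℤ)) * (6 * (i : ℚ) * (j : ℚ)) *
      ((Nat.factorial (2 * j) : ℚ) / (2 ^ j * (Nat.factorial j : ℚ))) ^ 2 *
      ((2 ^ i * (Nat.factorial i : ℚ)) / (Nat.factorial (2 * i) : ℚ)) ^ 2 *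
      ((Nat.factorial (2 * i - 1) : ℚ) / (Nat.factorial (i + j) : ℚ)) *
      ((Nat.factorial (2 * j + i - 1) : ℚ) / (Nat.factorial (3 * j) : ℚ)) *
      (Nat.choose j (i - j) : ℚ)) :
    padicValRat 2 (j : ℚ) ≤ padicValRat 2 a := by
  have hi : 1 ≤ i := by omega
  have h2q : (2 : ℚ) ≠ 0 := two_ne_zero
  have hfac : ∀ n : ℕ, ((Nat.factorial n : ℚ)) ≠ 0 :=
    fun n => Nat.cast_ne_zero.mpr (Nat.factorial_ne_zero n)
  have hiq : ((i : ℚ)) ≠ 0 := Nat.cast_ne_zero.mpr (by omega)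
  have hjq : ((j : ℚ)) ≠ 0 := Nat.cast_ne_zero.mpr (by omega)
  -- the seven factors
  set x1 : ℚ := (2 : ℚ) ^ ((j : ℤ) - (i : ℤ)) with hx1d
  set x2 : ℚ := 6 * (i : ℚ) * (j : ℚ) with hx2d
  set x3 : ℚ := ((Nat.factorial (2 * j) : ℚ) / (2 ^ j * (Nat.factorial j : ℚ))) with hx3d
  set x4 : ℚ := ((2 ^ i * (Nat.factorial i : ℚ)) / (Nat.factorial (2 * i) : ℚ)) with hx4d
  set x5 : ℚ := ((Nat.factorial (2 * i - 1) : ℚ) / (Nat.factorial (i + j) : ℚ)) with hx5d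
  set x6 : ℚ := ((Nat.factorial (2 * j + i - 1) : ℚ) / (Nat.factorial (3 * j) : ℚ)) with hx6d
  set x7 : ℚ := (Nat.choose j (i - j) : ℚ) with hx7d
  have n1 : x1 ≠ 0 := zpow_ne_zero _ h2q
  have n2 : x2 ≠ 0 := mul_ne_zero (mul_ne_zero (by norm_num) hiq) hjq
  have n3 : x3 ≠ 0 := div_ne_zero (hfac _) (mul_ne_zero (pow_ne_zero _ h2q) (hfac _))
  have n4 : x4 ≠ 0 := div_ne_zero (mul_ne_zero (pow_ne_zero _ h2q) (hfac _)) (hfac _)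
  have n5 : x5 ≠ 0 := div_ne_zero (hfac _) (hfac _)
  have n6 : x6 ≠ 0 := div_ne_zero (hfac _) (hfac _)
  have n7 : x7 ≠ 0 := Nat.cast_ne_zero.mpr (Nat.choose_pos (by omega)).ne'
  -- valuations of the factors
  have hv1 : padicValRat 2 x1 = (j : ℤ) - i := by
    rw [hx1d, show (j : ℤ) - i = -((i - j : ℕ) : ℤ) by omega, zpow_neg, zpow_natCast,
      padicValRat.inv, padicValRat.pow (2 : ℚ), v2_self_q]
    simp
  have hv2 : padicValRat 2 x2 = 1 + (padicValNat 2 i : ℤ) + padicValNat 2 j := by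
    have hc : x2 = ((6 * i * j : ℕ) : ℚ) := by rw [hx2d]; push_cast; ring
    have h6 : padicValNat 2 6 = 1 := by
      rw [show (6 : ℕ) = 2 * 3 by norm_num, padicValNat.mul (by norm_num) (by norm_num),
        padicValNat.self (by norm_num), padicValNat.eq_zero_of_not_dvd (by norm_num)]
    rw [hc, padicValRat.of_nat, padicValNat.mul (by omega) (by omega),
      padicValNat.mul (by omega) (by omega), h6]
    push_cast
    ring
  have hv3 : padicValRat 2 x3 =
      (padicValNat 2 (Nat.factorial (2 * j)) : ℤ) - ((j : ℤ) + padicValNat 2 (Nat.factorial j)) := by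
    rw [hx3d, padicValRat.div (hfac _) (mul_ne_zero (pow_ne_zero _ h2q) (hfac _)),
      padicValRat.mul (pow_ne_zero _ h2q) (hfac _), padicValRat.pow (2 : ℚ), v2_self_q,
      padicValRat.of_nat, padicValRat.of_nat]
    ring
  have hv4 : padicValRat 2 x4 =
      ((i : ℤ) + padicValNat 2 (Nat.factorial i)) - padicValNat 2 (Nat.factorial (2 * i)) := by
    rw [hx4d, padicValRat.div (mul_ne_zero (pow_ne_zero _ h2q) (hfac _)) (hfac _),
      padicValRat.mul (pow_ne_zero _ h2q) (hfac _), padicValRat.pow (2 : ℚ), v2_self_q,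
      padicValRat.of_nat, padicValRat.of_nat]
    ring
  have hv5 : padicValRat 2 x5 = (padicValNat 2 (Nat.factorial (2 * i - 1)) : ℤ) -
      padicValNat 2 (Nat.factorial (i + j)) := by
    rw [hx5d, padicValRat.div (hfac _) (hfac _), padicValRat.of_nat, padicValRat.of_nat]
  have hv6 : padicValRat 2 x6 = (padicValNat 2 (Nat.factorial (2 * j + i - 1)) : ℤ) -
      padicValNat 2 (Nat.factorial (3 * j)) := by
    rw [hx6d, padicValRat.div (hfac _) (hfac _), padicValRat.of_nat, padicValRat.of_nat]
  have hv7 : padicValRat 2 x7 = (padicValNat 2 (Nat.choose j (i - j)) : ℤ) := by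
    rw [hx7d, padicValRat.of_nat]
  -- total valuation
  have hA : padicValRat 2 a = padicValRat 2 x1 + padicValRat 2 x2 + padicValRat 2 x3 +
      padicValRat 2 x3 + padicValRat 2 x4 + padicValRat 2 x4 + padicValRat 2 x5 +
      padicValRat 2 x6 + padicValRat 2 x7 := by
    rw [ha]
    rw [padicValRat.mul (mul_ne_zero (mul_ne_zero (mul_ne_zero (mul_ne_zero (mul_ne_zero n1 n2)
        (pow_ne_zero 2 n3)) (pow_ne_zero 2 n4)) n5) n6) n7,
      padicValRat.mul (mul_ne_zero (mul_ne_zero (mul_ne_zero (mul_ne_zero n1 n2)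
        (pow_ne_zero 2 n3)) (pow_ne_zero 2 n4)) n5) n6,
      padicValRat.mul (mul_ne_zero (mul_ne_zero (mul_ne_zero n1 n2)
        (pow_ne_zero 2 n3)) (pow_ne_zero 2 n4)) n5,
      padicValRat.mul (mul_ne_zero (mul_ne_zero n1 n2) (pow_ne_zero 2 n3)) (pow_ne_zero 2 n4),
      padicValRat.mul (mul_ne_zero n1 n2) (pow_ne_zero 2 n3),
      padicValRat.mul n1 n2, padicValRat.pow x3, padicValRat.pow x4]
    push_cast
    ring
  -- arithmetic facts about factorial valuations
  have g1 : padicValNat 2 (Nat.factorial (2 * j)) = padicValNat 2 (Nat.factorial j) + j :=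
    padicValNat_factorial_mul j
  have g2 : padicValNat 2 (Nat.factorial (2 * i)) = padicValNat 2 (Nat.factorial i) + i :=
    padicValNat_factorial_mul i
  have g3 : padicValNat 2 (Nat.factorial (2 * i)) =
      padicValNat 2 (Nat.factorial (2 * i - 1)) + (padicValNat 2 i + 1) := by
    have h1 : VF (2 * i - 1 + 1) = VF (2 * i - 1) + padicValNat 2 (2 * i - 1 + 1) :=
      VF_succ (2 * i - 1)
    rw [show 2 * i - 1 + 1 = 2 * i by omega, v2_two_mul i (by omega)] at h1
    exact h1
  have g4 : padicValNat 2 (Nat.factorial (i + j)) + padicValNat 2 (Nat.factorial (3 * j)) ≤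
      j + padicValNat 2 (Nat.factorial i) + padicValNat 2 (Nat.factorial (2 * j + i - 1)) := by
    have h := main_ineq j (i - j) (by omega) (by omega)
    rw [show 2 * j + (i - j) = i + j by omega, show j + (i - j) = i by omega,
      show 3 * j + (i - j) - 1 = 2 * j + i - 1 by omega] at h
    exact h
  rw [padicValRat.of_nat, hA, hv1, hv2, hv3, hv4, hv5, hv6, hv7]
  omega
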